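/- (Alternating partial sum formula) Assume a − b + 1 ≠ 0. Then for every natural number n: Σ_{k=0}^{n} (−1)^k·G k = (1/(a − b + 1)) · ( (a + 1)·G 0 − G 1 + (−1)^n·(G(n+1) − b·G n) + c·d²·Σ_{k=0}^{n−1} (−d)^k ). -/

import Mathlib

theorem stmt_13 (a b c d : ℝ) (ha : 0 < a) (hb : 0 < b) (hc : 0 ≤ c) (hd : 0 ≤ d)
    (hden : d^2 - a*d - b ≠ 0) (hab : a - b + 1 ≠ 0)
    (G : ℕ → ℝ)
    (hG : ∀ n : ℕ, 2 ≤ n → G n = a * G (n-1) + b * G (n-2) + c * d^n) :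
    ∀ n : ℕ, ∑ k ∈ Finset.range (n+1), (-1:ℝ)^k * G k
      = (1 / (a - b + 1)) *
        ((a + 1) * G 0 - G 1 + (-1:ℝ)^n * (G (n+1) - b * G n)
          + c * d^2 * ∑ k ∈ Finset.range n, (-d)^k) := by
  intro n
  induction n with
  | zero =>
    simp only [zero_add, Finset.sum_range_one, Finset.sum_range_zero, pow_zero]
    field_simp
    ring
  | succ n ih =>
    have hrec : G (n+2) = a * G (n+1) + b * G n + c * d^(n+2) := by
      have := hG (n+2) (by omega)
      simpa using this
    rw [Finset.sum_range_succ, ih, Finset.sum_range_succ]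
    have h1 : ((-1:ℝ))^(n+1) = -(-1:ℝ)^n := by ring
    have h2 : ((-d:ℝ))^n = (-1:ℝ)^n * d^n := by rw [neg_pow]
    have h3 : (d:ℝ)^(n+2) = d^n * d^2 := by ring
    have e : n+1+1 = n+2 := rfl
    rw [e, hrec]
    field_simp
    ring
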